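/- Let θ ∈ (0, π] and a, b > 0. Define x = arctan(sin(θ/2)·sinh(a) / (cosh(b) + cos(θ/2)·cosh(a))) and y = arctan(sin(θ/2)·sinh(b) / (cosh(a) + cos(θ/2)·cosh(b))). Then tan(x + y) = sin(θ/2)·sinh(a+b) / (1 + cos(θ/2)·cosh(a+b)). -/

import Mathlib

lemma aux_alg (s c ca cb sa sb : ℝ) (hs0 : 0 < s) (hc0 : 0 ≤ c)
    (hsc : s^2 + c^2 = 1) (h2a : ca^2 = 1 + sa^2) (h2b : cb^2 = 1 + sb^2)
    (hsa : 0 < sa) (hsb : 0 < sb) (hca : 1 ≤ ca) (hcb : 1 ≤ cb) :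
    (s*sa/(cb+c*ca) + s*sb/(ca+c*cb)) / (1 - s*sa/(cb+c*ca) * (s*sb/(ca+c*cb)))
      = s*(sa*cb+ca*sb) / (1 + c*(ca*cb+sa*sb)) := by
  have hD1 : 0 < cb + c*ca := by nlinarith
  have hD2 : 0 < ca + c*cb := by nlinarith
  have hK : 1 ≤ ca*cb - sa*sb := by
    have hsq : (ca*cb)^2 = (1+sa^2)*(1+sb^2) := by rw [mul_pow, h2a, h2b]
    have hP : 0 < ca*cb + sa*sb + 1 := by nlinarith [mul_pos hsa hsb]
    nlinarith [hsq, sq_nonneg (sa-sb), hP]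
  have hC : 0 < 1 + c*(ca*cb+sa*sb) := by nlinarith [mul_pos hsa hsb]
  have hKc : 0 < ca*cb - sa*sb + c := by linarith
  have hsum : s*sa/(cb+c*ca) + s*sb/(ca+c*cb)
      = s*(sa*cb+ca*sb)*(ca*cb - sa*sb + c)/((cb+c*ca)*(ca+c*cb)) := by
    field_simp
    linear_combination (-(cb*sb)) * h2a + (-(ca*sa)) * h2b
  have huv : 1 - s*sa/(cb+c*ca) * (s*sb/(ca+c*cb))
      = (ca*cb - sa*sb + c)*(1 + c*(ca*cb+sa*sb))/((cb+c*ca)*(ca+c*cb)) := by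
    field_simp
    linear_combination (c - c*cb^2) * h2a + (-(c*sa^2)) * h2b + (-(sa*sb)) * hsc
  rw [hsum, huv]
  rw [div_div_div_cancel_right₀]
  · rw [mul_comm (ca*cb - sa*sb + c) (1 + c*(ca*cb+sa*sb)),
      mul_div_mul_right _ _ (ne_of_gt hKc)]
  · positivity

lemma aux_lt (s c ca cb sa sb : ℝ) (hs0 : 0 < s) (hc0 : 0 ≤ c)
    (hsc : s^2 + c^2 = 1) (h2a : ca^2 = 1 + sa^2) (h2b : cb^2 = 1 + sb^2)
    (hsa : 0 < sa) (hsb : 0 < sb) (hca : 1 ≤ ca) (hcb : 1 ≤ cb) :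
    s*sa/(cb+c*ca) * (s*sb/(ca+c*cb)) < 1 := by
  have hD1 : 0 < cb + c*ca := by nlinarith
  have hD2 : 0 < ca + c*cb := by nlinarith
  have hK : 1 ≤ ca*cb - sa*sb := by
    have hsq : (ca*cb)^2 = (1+sa^2)*(1+sb^2) := by rw [mul_pow, h2a, h2b]
    have hP : 0 < ca*cb + sa*sb + 1 := by nlinarith [mul_pos hsa hsb]
    nlinarith [hsq, sq_nonneg (sa-sb), hP]
  rw [div_mul_div_comm, div_lt_one (by positivity)]
  have hs1 : s^2 ≤ 1 := by nlinarith [sq_nonneg c]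
  have h1 : s*sa*(s*sb) ≤ sa*sb := by nlinarith [mul_pos hsa hsb]
  have h2 : c*(ca*ca) ≥ 0 := by positivity
  have h3 : c*(cb*cb) ≥ 0 := by positivity
  have h4 : c*c*(ca*cb) ≥ 0 := by positivity
  nlinarith [mul_pos hsa hsb]

open Real

theorem tan_add_gap_cone_point (θ a b x y : ℝ)
    (hθ : θ ∈ Set.Ioc 0 π) (ha : 0 < a) (hb : 0 < b)
    (hx : x = Real.arctan (Real.sin (θ/2) * Real.sinh a /
      (Real.cosh b + Real.cos (θ/2) * Real.cosh a)))
    (hy : y = Real.arctan (Real.sin (θ/2) * Real.sinh b /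
      (Real.cosh a + Real.cos (θ/2) * Real.cosh b))) :
    Real.tan (x + y) = Real.sin (θ/2) * Real.sinh (a + b) /
      (1 + Real.cos (θ/2) * Real.cosh (a + b)) := by
  obtain ⟨hθ0, hθπ⟩ := hθ
  have hs0 : 0 < Real.sin (θ/2) :=
    Real.sin_pos_of_pos_of_lt_pi (by linarith) (by linarith [Real.pi_pos])
  have hc0 : 0 ≤ Real.cos (θ/2) :=
    Real.cos_nonneg_of_mem_Icc ⟨by linarith [Real.pi_pos], by linarith⟩
  have hsc : Real.sin (θ/2)^2 + Real.cos (θ/2)^2 = 1 := Real.sin_sq_add_cos_sq _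
  have h2a : Real.cosh a ^ 2 = 1 + Real.sinh a ^ 2 := by rw [Real.cosh_sq]; ring
  have h2b : Real.cosh b ^ 2 = 1 + Real.sinh b ^ 2 := by rw [Real.cosh_sq]; ring
  have hsa : 0 < Real.sinh a := Real.sinh_pos_iff.mpr ha
  have hsb : 0 < Real.sinh b := Real.sinh_pos_iff.mpr hb
  have hlt := aux_lt (Real.sin (θ/2)) (Real.cos (θ/2)) (Real.cosh a) (Real.cosh b)
    (Real.sinh a) (Real.sinh b) hs0 hc0 hsc h2a h2b hsa hsb (Real.one_le_cosh a) (Real.one_le_cosh b)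
  rw [hx, hy, Real.arctan_add hlt, Real.tan_arctan, Real.sinh_add, Real.cosh_add]
  exact aux_alg (Real.sin (θ/2)) (Real.cos (θ/2)) (Real.cosh a) (Real.cosh b)
    (Real.sinh a) (Real.sinh b) hs0 hc0 hsc h2a h2b hsa hsb (Real.one_le_cosh a) (Real.one_le_cosh b)
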